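/- Let G be an abelian group, and for each i ∈ ℕ let β⁽ⁱ⁾ be a partial action of G on a locally compact Hausdorff space X_i, with domains D⁽ⁱ⁾_{−g} and ranges D⁽ⁱ⁾_g. Let φ_i : X_{i+1} → X_i be continuous surjections intertwining the actions: for all g ∈ G and x ∈ X_{i+1}, φ_i(x) ∈ D⁽ⁱ⁾_g if and only if x ∈ D⁽ⁱ⁺¹⁾_g, and β⁽ⁱ⁾_g(φ_i(x)) = φ_i(β⁽ⁱ⁺¹⁾_g(x)) for x ∈ D⁽ⁱ⁺¹⁾_{−g}. Let X = {(x_i) ∈ ∏_i X_i : φ_i(x_{i+1}) = x_i for all i} with the subspace topology of the product, and let π_i : X → X_i be the coordinate projections. Then for each g ∈ G: (i) the set D_{−g} = {(x_i) ∈ X : x_i ∈ D⁽ⁱ⁾_{−g} for all i} equals π_1⁻¹(D⁽¹⁾_{−g}) and hence is open in X; (ii) β_g((x_i)) = (β⁽ⁱ⁾_g(x_i))_i defines a homeomorphism from D_{−g} onto D_g = {(x_i) ∈ X : x_i ∈ D⁽ⁱ⁾_g for all i}; and (iii) the family β = {β_g : g ∈ G} is a partial action of G on X. -/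

import Mathlib

/-- A `Σ`-family on a set `X`, for a subset `S = Σ` of an abelian group `G` with
`Σ + Σ ⊆ Σ` and `0 ∈ Σ`: a family of bijections `α_t : X_{-t} → X_t` (`t ∈ Σ`) between
subsets of `X`, encoded by domain sets `D : G → Set X` together with total maps
`act t : X → X` (whose values outside `D (-t)` are irrelevant), such that `X_0 = X`
and `α_0 = id_X`. -/
structure SigmaFamily (G : Type*) [AddCommGroup G] (S : Set G) (X : Type*) where
  D : G → Set X
  act : G → X → X
  mapsTo : ∀ t ∈ S, Set.MapsTo (act t) (D (-t)) (D t)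
  injOn : ∀ t ∈ S, Set.InjOn (act t) (D (-t))
  surjOn : ∀ t ∈ S, Set.SurjOn (act t) (D (-t)) (D t)
  D_zero : D 0 = Set.univ
  act_zero : ∀ x, act 0 x = x

namespace SigmaFamily

variable {G : Type*} [AddCommGroup G] {S : Set G} {X : Type*}

/-- Statement (I) (resp. (II), (III)) of the third arrow property:
`x ∈ X_{-t}` and `y = α_t x`. -/
def ArrowI (F : SigmaFamily G S X) (t : G) (x y : X) : Prop :=
  x ∈ F.D (-t) ∧ y = F.act t x

/-- The third arrow property: any two of (I), (II), (III) imply the third. -/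
def ThirdArrow (F : SigmaFamily G S X) : Prop :=
  ∀ s ∈ S, ∀ t ∈ S, ∀ x y z : X,
    (F.ArrowI t x y → F.ArrowI s y z → F.ArrowI (s + t) x z) ∧
    (F.ArrowI t x y → F.ArrowI (s + t) x z → F.ArrowI s y z) ∧
    (F.ArrowI s y z → F.ArrowI (s + t) x z → F.ArrowI t x y)

/-- Condition (1a): `α_s(X_{-s} ∩ X_t) = X_s ∩ X_{s+t}`. -/
def Cond1a (F : SigmaFamily G S X) : Prop :=
  ∀ s ∈ S, ∀ t ∈ S, F.act s '' (F.D (-s) ∩ F.D t) = F.D s ∩ F.D (s + t)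

/-- Condition (1b): `α_t(X_{-t} ∩ X_{-s-t}) = X_t ∩ X_{-s}`. -/
def Cond1b (F : SigmaFamily G S X) : Prop :=
  ∀ s ∈ S, ∀ t ∈ S, F.act t '' (F.D (-t) ∩ F.D (-(s + t))) = F.D t ∩ F.D (-s)

/-- Condition (1′): `α_s(X_{-s} ∩ X_t) ⊆ X_{s+t}`. -/
def Cond1' (F : SigmaFamily G S X) : Prop :=
  ∀ s ∈ S, ∀ t ∈ S, F.act s '' (F.D (-s) ∩ F.D t) ⊆ F.D (s + t)

/-- Condition (2): for `x ∈ X_{-t} ∩ X_{-s-t}`, `α_t x ∈ X_{-s}` and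
`α_{s+t} x = α_s (α_t x)`. -/
def Cond2 (F : SigmaFamily G S X) : Prop :=
  ∀ s ∈ S, ∀ t ∈ S, ∀ x ∈ F.D (-t) ∩ F.D (-(s + t)),
    F.act t x ∈ F.D (-s) ∧ F.act (s + t) x = F.act s (F.act t x)

end SigmaFamily

/-- The inverse limit of the system `(Xᵢ, φᵢ)`. -/
abbrev InvLim (X : ℕ → Type*) (φ : ∀ i, X (i + 1) → X i) : Type _ :=
  {x : ∀ i, X i // ∀ i, φ i (x (i + 1)) = x i}

/-- The coordinatewise domain sets on the inverse limit:
`D_g = {(xᵢ) : xᵢ ∈ D⁽ⁱ⁾_g for all i}`. -/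
def DL (X : ℕ → Type*) (φ : ∀ i, X (i + 1) → X i) {G : Type*} [AddCommGroup G]
    (β : ∀ i, SigmaFamily G (Set.univ : Set G) (X i)) (g : G) : Set (InvLim X φ) :=
  {x | ∀ i, x.val i ∈ (β i).D g}

section Aux

variable {G : Type*} [AddCommGroup G]

/-- On a single family with Cond2, `act (-t)` is a left inverse of `act t` on `D (-t)`. -/
private theorem act_inv_act {Y : Type*} (F : SigmaFamily G (Set.univ : Set G) Y)
    (h2 : F.Cond2) (t : G) (x : Y) (hx : x ∈ F.D (-t)) :
    F.act (-t) (F.act t x) = x := by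
  have h := (h2 (-t) (Set.mem_univ _) t (Set.mem_univ _) x
    (by simpa [F.D_zero] using hx)).2
  simpa [F.act_zero] using h.symm

variable {X : ℕ → Type*} {φ : ∀ i, X (i + 1) → X i}
  (β : ∀ i, SigmaFamily G (Set.univ : Set G) (X i))

private theorem mem_DL
    (hiff : ∀ i (g : G) (x : X (i + 1)), φ i x ∈ (β i).D g ↔ x ∈ (β (i + 1)).D g)
    {g : G} {x : InvLim X φ} :
    x ∈ DL X φ β g ↔ x.val 0 ∈ (β 0).D g := by
  constructor
  · exact fun h => h 0
  · intro h0 i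
    induction i with
    | zero => exact h0
    | succ n ih =>
      have := (hiff n g (x.val (n + 1)))
      rw [x.property n] at this
      exact this.mp ih

open Classical in
/-- The coordinatewise action on the inverse limit (identity off the domain). -/
private noncomputable def Bact
    (hint : ∀ i (g : G), ∀ x ∈ (β (i + 1)).D (-g),
      (β i).act g (φ i x) = φ i ((β (i + 1)).act g x))
    (g : G) (x : InvLim X φ) : InvLim X φ :=
  if h : x ∈ DL X φ β (-g) then
    ⟨fun i => (β i).act g (x.val i), fun i => by
      rw [← hint i g _ (h (i + 1)), x.property i]⟩
  else x

variable (hint : ∀ i (g : G), ∀ x ∈ (β (i + 1)).D (-g),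
      (β i).act g (φ i x) = φ i ((β (i + 1)).act g x))

private theorem Bact_val {g : G} {x : InvLim X φ} (h : x ∈ DL X φ β (-g)) (i : ℕ) :
    (Bact β hint g x).val i = (β i).act g (x.val i) := by
  simp [Bact, h]

private theorem Bact_mapsTo (g : G) :
    Set.MapsTo (Bact β hint g) (DL X φ β (-g)) (DL X φ β g) := by
  intro x hx i
  rw [Bact_val β hint hx]
  exact (β i).mapsTo g (Set.mem_univ _) (hx i)

private theorem Bact_mem {g : G} {x : InvLim X φ} (hx : x ∈ DL X φ β (-g)) :
    Bact β hint g x ∈ DL X φ β (-(-g)) := by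
  rw [neg_neg]; exact Bact_mapsTo β hint g hx

private theorem Bact_inv (h2 : ∀ i, (β i).Cond2) (g : G)
    {x : InvLim X φ} (hx : x ∈ DL X φ β (-g)) :
    Bact β hint (-g) (Bact β hint g x) = x := by
  apply Subtype.ext; funext i
  rw [Bact_val β hint (Bact_mem β hint hx), Bact_val β hint hx]
  exact act_inv_act (β i) (h2 i) g _ (hx i)

variable (h2 : ∀ i, (β i).Cond2)

/-- The coordinatewise `SigmaFamily` on the inverse limit. -/
private noncomputable def BL : SigmaFamily G (Set.univ : Set G) (InvLim X φ) where
  D := DL X φ β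
  act := Bact β hint
  mapsTo t _ := Bact_mapsTo β hint t
  injOn t _ := by
    intro x hx y hy hxy
    calc x = Bact β hint (-t) (Bact β hint t x) := (Bact_inv β hint h2 t hx).symm
      _ = Bact β hint (-t) (Bact β hint t y) := by rw [hxy]
      _ = y := Bact_inv β hint h2 t hy
  surjOn t _ := by
    intro y hy
    have hy' : y ∈ DL X φ β (-(-t)) := by rwa [neg_neg]
    refine ⟨Bact β hint (-t) y, Bact_mapsTo β hint (-t) hy', ?_⟩
    have := Bact_inv β hint h2 (-t) hy'
    rwa [neg_neg] at this
  D_zero := by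
    ext x; simp [DL, SigmaFamily.D_zero]
  act_zero x := by
    have hx : x ∈ DL X φ β (-(0 : G)) := by
      intro i; simp [SigmaFamily.D_zero]
    apply Subtype.ext; funext i
    rw [Bact_val β hint hx]
    exact (β i).act_zero _

end Aux

/-- given partial actions `β⁽ⁱ⁾` of an abelian group `G` on locally
compact Hausdorff spaces `Xᵢ` intertwined by continuous surjections `φᵢ`, on the
inverse limit `X`: (i) `D_{-g}` equals the preimage of `D⁽⁰⁾_{-g}` under the first
coordinate projection, hence is open; (ii) acting coordinatewise gives a
homeomorphism of `D_{-g}` onto `D_g`; (iii) the coordinatewise family is a partial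
action of `G` on `X` (with open domains and continuous action). -/
theorem invLim_partialAction {G : Type*} [AddCommGroup G] (X : ℕ → Type*)
    [∀ i, TopologicalSpace (X i)] [∀ i, LocallyCompactSpace (X i)] [∀ i, T2Space (X i)]
    (β : ∀ i, SigmaFamily G (Set.univ : Set G) (X i))
    (h1 : ∀ i, (β i).Cond1') (h2 : ∀ i, (β i).Cond2)
    (hopen : ∀ i (g : G), IsOpen ((β i).D g))
    (hcont : ∀ i (g : G), ContinuousOn ((β i).act g) ((β i).D (-g)))
    (φ : ∀ i, X (i + 1) → X i)
    (hφc : ∀ i, Continuous (φ i)) (hφs : ∀ i, Function.Surjective (φ i))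
    (hiff : ∀ i (g : G) (x : X (i + 1)), φ i x ∈ (β i).D g ↔ x ∈ (β (i + 1)).D g)
    (hint : ∀ i (g : G), ∀ x ∈ (β (i + 1)).D (-g),
      (β i).act g (φ i x) = φ i ((β (i + 1)).act g x)) :
    (∀ g : G,
      DL X φ β (-g) = (fun x : InvLim X φ => x.val 0) ⁻¹' ((β 0).D (-g)) ∧
      IsOpen (DL X φ β (-g))) ∧
    (∀ g : G, ∃ e : ↥(DL X φ β (-g)) ≃ₜ ↥(DL X φ β g),
      ∀ (x : ↥(DL X φ β (-g))) (i : ℕ),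
        (e x).val.val i = (β i).act g (x.val.val i)) ∧
    (∃ B : SigmaFamily G (Set.univ : Set G) (InvLim X φ), B.Cond1' ∧ B.Cond2 ∧
      (∀ g : G, B.D g = DL X φ β g) ∧
      (∀ g : G, ∀ x ∈ DL X φ β (-g), ∀ i, (B.act g x).val i = (β i).act g (x.val i)) ∧
      (∀ g : G, IsOpen (B.D g)) ∧
      (∀ g : G, ContinuousOn (B.act g) (B.D (-g)))) := by
  classical
  have hmem : ∀ (g : G) (x : InvLim X φ), x ∈ DL X φ β g ↔ x.val 0 ∈ (β 0).D g :=
    fun g x => mem_DL β hiff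
  have hproj : Continuous fun x : InvLim X φ => x.val 0 :=
    (continuous_apply 0).comp continuous_subtype_val
  have hDLeq : ∀ g : G,
      DL X φ β g = (fun x : InvLim X φ => x.val 0) ⁻¹' ((β 0).D g) := by
    intro g; ext x; exact hmem g x
  have hDLopen : ∀ g : G, IsOpen (DL X φ β g) := by
    intro g; rw [hDLeq g]; exact (hopen 0 g).preimage hproj
  have hBcont : ∀ g : G, ContinuousOn (Bact β hint g) (DL X φ β (-g)) := by
    intro g
    refine (Topology.IsInducing.subtypeVal
      (t := {x : ∀ i, X i | ∀ i, φ i (x (i + 1)) = x i})).continuousOn_iff.mpr ?_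
    have hnice : ContinuousOn
        (fun x : InvLim X φ => fun i => (β i).act g (x.val i)) (DL X φ β (-g)) := by
      apply continuousOn_pi.mpr
      intro i
      exact (hcont i g).comp
        ((continuous_apply i).comp continuous_subtype_val).continuousOn
        (fun x hx => hx i)
    exact hnice.congr fun x hx => funext fun i => Bact_val β hint hx i
  refine ⟨fun g => ⟨hDLeq (-g), hDLopen (-g)⟩, ?_, ?_⟩
  · intro g
    have hcont' : ContinuousOn (Bact β hint (-g)) (DL X φ β g) := by
      have := hBcont (-g); rwa [neg_neg] at this
    refine ⟨{ toFun := fun x => ⟨Bact β hint g x.val, Bact_mapsTo β hint g x.prop⟩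
              invFun := fun y => ⟨Bact β hint (-g) y.val,
                Bact_mapsTo β hint (-g) (by rw [neg_neg]; exact y.prop)⟩
              left_inv := fun x => Subtype.ext (Bact_inv β hint h2 g x.prop)
              right_inv := fun y => Subtype.ext (by
                have h := Bact_inv β hint h2 (-g) (x := y.val)
                  (by rw [neg_neg]; exact y.prop)
                rwa [neg_neg] at h)
              continuous_toFun := ((hBcont g).restrict).subtype_mk _
              continuous_invFun := (hcont'.restrict).subtype_mk _ },
      fun x i => Bact_val β hint x.prop i⟩
  · refine ⟨BL β hint h2, ?_, ?_, fun g => rfl,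
      fun g x hx i => Bact_val β hint hx i, fun g => hDLopen g, fun g => hBcont g⟩
    · -- Cond1'
      rintro s - t - y ⟨x, hx, rfl⟩ i
      show (Bact β hint s x).val i ∈ (β i).D (s + t)
      rw [Bact_val β hint hx.1]
      exact h1 i s (Set.mem_univ _) t (Set.mem_univ _) ⟨x.val i, ⟨hx.1 i, hx.2 i⟩, rfl⟩
    · -- Cond2
      rintro s - t - x hx
      have hmemi : ∀ i, (β i).act t (x.val i) ∈ (β i).D (-s) ∧
          (β i).act (s + t) (x.val i) = (β i).act s ((β i).act t (x.val i)) :=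
        fun i => h2 i s (Set.mem_univ _) t (Set.mem_univ _) (x.val i) ⟨hx.1 i, hx.2 i⟩
      have hBt : Bact β hint t x ∈ DL X φ β (-s) := by
        intro i; rw [Bact_val β hint hx.1]; exact (hmemi i).1
      refine ⟨hBt, ?_⟩
      apply Subtype.ext; funext i
      show (Bact β hint (s + t) x).val i = (Bact β hint s (Bact β hint t x)).val i
      rw [Bact_val β hint hx.2 i, Bact_val β hint hBt i, Bact_val β hint hx.1 i]
      exact (hmemi i).2
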